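/- Let d ≥ 1 be an integer, M > 0, and let S ⊂ ℝ^d be a bounded measurable set with μ(S) = M^d, equipped with the uniform density f = M^{−d} on S. Let x_1, …, x_n ∈ ℝ^d be distinct points with Voronoi cells V_i = {u ∈ S : ‖u − x_i‖ ≤ ‖u − x_j‖ for all j ∈ {1,…,n}}. Suppose there is a bounded measurable set T ⊂ ℝ^d with 0 < μ(T) < ∞ such that for each i there is a linear isometry O_i of ℝ^d with V_i = x_i + O_i(T − c(T)), where c(T) is the centroid of T. Then R̃(X) = (1/d)·log(n/M^d) + ζ(T). -/

import Mathlib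

open MeasureTheory Real
open scoped ENNReal BigOperators

/-- The centroid `c(A)` of a set `A`. -/
noncomputable def centroid (d : ℕ) (A : Set (EuclideanSpace ℝ (Fin d))) :
    EuclideanSpace ℝ (Fin d) :=
  (volume A).toReal⁻¹ • ∫ u in A, u

/-- The normalized logarithmic moment
`ζ(A) = μ(A)⁻¹ ∫_{A - c(A)} log (1/‖u‖) du + d⁻¹ log μ(A)`. -/
noncomputable def zeta (d : ℕ) (A : Set (EuclideanSpace ℝ (Fin d))) : ℝ :=
  (volume A).toReal⁻¹ * (∫ u in (fun v => v - centroid d A) '' A, Real.log (1 / ‖u‖))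
    + (d : ℝ)⁻¹ * Real.log (volume A).toReal

theorem congruent_voronoi_rate (d : ℕ) (hd : 1 ≤ d) (M : ℝ) (hM : 0 < M)
    (S : Set (EuclideanSpace ℝ (Fin d))) (hSb : Bornology.IsBounded S)
    (hSm : MeasurableSet S) (hSvol : volume S = ENNReal.ofReal (M ^ d))
    (n : ℕ) (hn : 1 ≤ n) (X : Fin n → EuclideanSpace ℝ (Fin d))
    (hX : Function.Injective X)
    (V : Fin n → Set (EuclideanSpace ℝ (Fin d)))
    (hV : ∀ i, V i = {u ∈ S | ∀ j, ‖u - X i‖ ≤ ‖u - X j‖})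
    (T : Set (EuclideanSpace ℝ (Fin d))) (hTb : Bornology.IsBounded T)
    (hTm : MeasurableSet T) (hT0 : volume T ≠ 0) (hTtop : volume T ≠ ⊤)
    (O : Fin n → (EuclideanSpace ℝ (Fin d) ≃ₗᵢ[ℝ] EuclideanSpace ℝ (Fin d)))
    (hcong : ∀ i, V i = (fun v => X i + O i (v - centroid d T)) '' T) :
    (∫ u in S, Real.log (1 / ⨅ i, ‖u - X i‖) / M ^ d) =
      (1 / d) * Real.log (n / M ^ d) + zeta d T := by
  classical
  haveI : NeZero n := ⟨Nat.one_le_iff_ne_zero.mp hn⟩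
  set c : EuclideanSpace ℝ (Fin d) := centroid d T with hc
  set φ : Fin n → (EuclideanSpace ℝ (Fin d) → EuclideanSpace ℝ (Fin d)) :=
    fun i v => X i + O i (v - c) with hφ
  -- measure preserving and measurable embedding facts
  have hφmp : ∀ i, MeasurePreserving (φ i) volume volume := fun i =>
    ((measurePreserving_add_left volume (X i)).comp
      ((O i).measurePreserving.comp (measurePreserving_sub_right volume c)))
  have hφemb : ∀ i, MeasurableEmbedding (φ i) := by
    intro i
    have h : φ i = (MeasurableEquiv.addLeft (X i)) ∘
        ((O i).toHomeomorph.toMeasurableEquiv) ∘ (MeasurableEquiv.subRight c) := rfl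
    rw [h]
    exact (MeasurableEquiv.addLeft (X i)).measurableEmbedding.comp
      (((O i).toHomeomorph.toMeasurableEquiv).measurableEmbedding.comp
        (MeasurableEquiv.subRight c).measurableEmbedding)
  have hτmp : MeasurePreserving (fun v : EuclideanSpace ℝ (Fin d) => v - c) volume volume :=
    measurePreserving_sub_right volume c
  have hτemb : MeasurableEmbedding (fun v : EuclideanSpace ℝ (Fin d) => v - c) :=
    (MeasurableEquiv.subRight c).measurableEmbedding
  -- basic facts about the Voronoi cells
  have hVm : ∀ i, MeasurableSet (V i) := fun i => by
    rw [hcong i]; exact (hφemb i).measurableSet_image.2 hTm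
  have hVsub : ∀ i, V i ⊆ S := fun i u hu => by rw [hV i] at hu; exact hu.1
  have hUnion : (⋃ i, V i) = S := by
    apply Set.Subset.antisymm (Set.iUnion_subset hVsub)
    intro u hu
    obtain ⟨i, hi⟩ := Finite.exists_min (fun j => ‖u - X j‖)
    exact Set.mem_iUnion.2 ⟨i, by rw [hV i]; exact ⟨hu, hi⟩⟩
  have hAE : Pairwise (Function.onFun (MeasureTheory.AEDisjoint volume) V) := by
    intro i j hij
    have hne : X i ≠ X j := fun h => hij (hX h)
    refine measure_mono_null (fun u hu => ?_)
      (Measure.addHaar_affineSubspace volume (AffineSubspace.perpBisector (X i) (X j))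
        (by simpa [AffineSubspace.perpBisector_eq_top] using hne))
    obtain ⟨h1, h2⟩ := hu
    rw [hV i] at h1; rw [hV j] at h2
    have heq : ‖u - X i‖ = ‖u - X j‖ := le_antisymm (h1.2 j) (h2.2 i)
    have : dist u (X i) = dist u (X j) := by rw [dist_eq_norm, dist_eq_norm, heq]
    exact AffineSubspace.mem_perpBisector_iff_dist_eq.2 this
  -- equal volumes
  have hvolV : ∀ i, volume (V i) = volume T := fun i => by
    rw [hcong i, ← (hφmp i).measure_preimage_emb (hφemb i),
      Set.preimage_image_eq _ (hφemb i).injective]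
  -- counting volumes
  have hsum : volume S = n * volume T := by
    rw [← hUnion, measure_iUnion₀ hAE (fun i => (hVm i).nullMeasurableSet), tsum_fintype]
    simp [hvolV, Finset.sum_const, nsmul_eq_mul]
  -- real volume of T
  have hMd : (0 : ℝ) < M ^ d := pow_pos hM d
  have hnR : (0 : ℝ) < n := by exact_mod_cast hn
  set t : ℝ := (volume T).toReal with htdef
  have htpos : 0 < t := ENNReal.toReal_pos hT0 hTtop
  have hteq : (n : ℝ) * t = M ^ d := by
    have h1 : (volume S).toReal = M ^ d := by rw [hSvol, ENNReal.toReal_ofReal hMd.le]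
    have h2 : (volume S).toReal = (n : ℝ) * t := by
      rw [hsum, ENNReal.toReal_mul]; simp [htdef]
    rw [← h1, h2]
  have htval : t = M ^ d / n := by field_simp [← hteq]; exact (mul_comm _ _).trans hteq
  -- cancellation of the logarithmic terms
  have hcancel : (1 / (d : ℝ)) * Real.log (n / M ^ d) + (d : ℝ)⁻¹ * Real.log t = 0 := by
    have hdpos : (0 : ℝ) < d := by exact_mod_cast hd
    have h1 : (n : ℝ) / M ^ d = t⁻¹ := by rw [htval]; field_simp
    rw [h1, Real.log_inv]
    field_simp
    ring
  -- change of variables for the zeta integral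
  have hI1 : (∫ u in (fun v => v - c) '' T, Real.log (1 / ‖u‖))
      = ∫ v in T, Real.log (1 / ‖v - c‖) :=
    hτmp.setIntegral_image_emb hτemb _ T
  -- change of variables for the Voronoi integrals
  have hI2 : ∀ i, (∫ u in V i, Real.log (1 / ‖u - X i‖))
      = ∫ v in T, Real.log (1 / ‖v - c‖) := fun i => by
    rw [hcong i, (hφmp i).setIntegral_image_emb (hφemb i)]
    simp only [hφ, add_sub_cancel_left, LinearIsometryEquiv.norm_map]
  -- pointwise identification of the infimum on each cell
  have hinf : ∀ i, ∀ u ∈ V i, (⨅ j, ‖u - X j‖) = ‖u - X i‖ := by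
    intro i u hu
    rw [hV i] at hu
    refine le_antisymm (ciInf_le ⟨0, ?_⟩ i) (le_ciInf fun j => hu.2 j)
    rintro x ⟨j, rfl⟩
    positivity
  -- integrability transfer
  have hgcomp : ∀ i, (fun u => Real.log (1 / ‖u - X i‖)) ∘ φ i
      = fun v => Real.log (1 / ‖v - c‖) := fun i => by
    funext v
    simp only [hφ, Function.comp_apply, add_sub_cancel_left, LinearIsometryEquiv.norm_map]
  have hIntEquiv : ∀ i, (IntegrableOn (fun u => Real.log (1 / ‖u - X i‖)) (V i) volume
      ↔ IntegrableOn (fun v => Real.log (1 / ‖v - c‖)) T volume) := fun i => by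
    rw [hcong i]
    rw [show IntegrableOn (fun u => Real.log (1 / ‖u - X i‖)) (φ i '' T) volume
        = Integrable (fun u => Real.log (1 / ‖u - X i‖)) (volume.restrict (φ i '' T)) from rfl,
      ← ((hφmp i).restrict_image_emb (hφemb i) T).integrable_comp_emb (hφemb i), hgcomp i]
    rfl
  have hIntEquivτ : IntegrableOn (fun u : EuclideanSpace ℝ (Fin d) => Real.log (1 / ‖u‖))
      ((fun v => v - c) '' T) volume
      ↔ IntegrableOn (fun v => Real.log (1 / ‖v - c‖)) T volume := by
    rw [show IntegrableOn (fun u : EuclideanSpace ℝ (Fin d) => Real.log (1 / ‖u‖))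
        ((fun v => v - c) '' T) volume
        = Integrable (fun u : EuclideanSpace ℝ (Fin d) => Real.log (1 / ‖u‖))
          (volume.restrict ((fun v => v - c) '' T)) from rfl,
      ← (hτmp.restrict_image_emb hτemb T).integrable_comp_emb hτemb]
    rfl
  -- pointwise congruence of the main integrand with the cell integrand
  have hcongr : ∀ i, (∫ u in V i, Real.log (1 / ⨅ j, ‖u - X j‖))
      = ∫ u in V i, Real.log (1 / ‖u - X i‖) := fun i =>
    setIntegral_congr_fun (hVm i) (fun u hu => by rw [hinf i u hu])
  have hintcongr : ∀ i, (IntegrableOn (fun u => Real.log (1 / ⨅ j, ‖u - X j‖)) (V i) volume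
      ↔ IntegrableOn (fun u => Real.log (1 / ‖u - X i‖)) (V i) volume) := fun i =>
    integrableOn_congr_fun (fun u hu => by rw [hinf i u hu]) (hVm i)
  set I : ℝ := ∫ v in T, Real.log (1 / ‖v - c‖) with hI
  -- Main case split on integrability
  by_cases hInt : IntegrableOn (fun v => Real.log (1 / ‖v - c‖)) T volume
  · -- integrable case
    have hIntV : ∀ i, IntegrableOn (fun u => Real.log (1 / ⨅ j, ‖u - X j‖)) (V i) volume :=
      fun i => (hintcongr i).2 ((hIntEquiv i).2 hInt)
    have hIntS : IntegrableOn (fun u => Real.log (1 / ⨅ j, ‖u - X j‖)) S volume := by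
      rw [← hUnion]; exact (integrableOn_finite_iUnion).2 hIntV
    have hsplit : (∫ u in S, Real.log (1 / ⨅ j, ‖u - X j‖))
        = ∑ i, ∫ u in V i, Real.log (1 / ⨅ j, ‖u - X j‖) := by
      rw [← hUnion] at hIntS ⊢
      rw [integral_iUnion_ae (fun i => (hVm i).nullMeasurableSet) hAE hIntS, tsum_fintype]
    have hval : (∫ u in S, Real.log (1 / ⨅ j, ‖u - X j‖)) = n * I := by
      rw [hsplit]
      have : ∀ i ∈ Finset.univ, (∫ u in V i, Real.log (1 / ⨅ j, ‖u - X j‖)) = I :=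
        fun i _ => by rw [hcongr i, hI2 i]
      rw [Finset.sum_congr rfl this, Finset.sum_const, Finset.card_univ, Fintype.card_fin,
        nsmul_eq_mul]
    rw [integral_div, hval, zeta, ← hc, hI1, ← htdef]
    have ht1 : t⁻¹ = (n : ℝ) / M ^ d := by rw [htval]; field_simp
    rw [ht1]
    have : (1 : ℝ) / d * Real.log (n / M ^ d) + (n / M ^ d * I + (d : ℝ)⁻¹ * Real.log t)
        = (n / M ^ d * I) + ((1 : ℝ) / d * Real.log (n / M ^ d) + (d : ℝ)⁻¹ * Real.log t) := by
      ring
    rw [this, hcancel, add_zero]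
    field_simp
  · -- non-integrable case: both sides vanish
    have hnotS : ¬ IntegrableOn (fun u => Real.log (1 / ⨅ j, ‖u - X j‖)) S volume := by
      intro h
      exact hInt ((hIntEquiv ⟨0, hn⟩).1 ((hintcongr ⟨0, hn⟩).1
        (h.mono_set (hVsub ⟨0, hn⟩))))
    have hLHS : (∫ u in S, Real.log (1 / ⨅ j, ‖u - X j‖) / M ^ d) = 0 := by
      rw [integral_div]
      rw [integral_undef hnotS]
      simp
    have hRHS0 : (∫ u in (fun v => v - c) '' T, Real.log (1 / ‖u‖)) = 0 :=
      integral_undef (fun h => hInt (hIntEquivτ.1 h))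
    rw [hLHS, zeta, ← hc, hRHS0, ← htdef, mul_zero, zero_add]
    exact hcancel.symm
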